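/- Let G be a finite simple graph with minimum degree at least 3, and let C be an edge 2-coloring of G. Then there exists a characteristic subgraph χ of G with respect to C that is a disjoint union of paths, i.e., χ has maximum degree at most 2 and contains no cycle. -/

import Mathlib

open SimpleGraph

/-- `C` is an edge 2-coloring of `G`: for every vertex, the edges incident to it
carry at most 2 distinct colors. -/
def IsEdge2Coloring {V : Type*} (G : SimpleGraph V) (C : Sym2 V → ℕ) : Prop :=
  ∀ v : V, (C '' G.incidenceSet v).ncard ≤ 2

/-- The number of distinct colors used by a coloring `C` on the edges of `G`. -/
noncomputable def numColors {V : Type*} (G : SimpleGraph V) (C : Sym2 V → ℕ) : ℕ :=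
  (C '' G.edgeSet).ncard

/-- `OPT G`: the maximum number of colors used by an edge 2-coloring of `G`. -/
noncomputable def OPT {V : Type*} (G : SimpleGraph V) : ℕ :=
  sSup {n : ℕ | ∃ C : Sym2 V → ℕ, IsEdge2Coloring G C ∧ numColors G C = n}

/-- `M` is a matching of `G`, given as a set of edges: the edges belong to `G` and
are pairwise vertex-disjoint. -/
def IsMatchingSet {V : Type*} (G : SimpleGraph V) (M : Set (Sym2 V)) : Prop :=
  M ⊆ G.edgeSet ∧ ∀ e ∈ M, ∀ f ∈ M, e ≠ f → ∀ v : V, v ∈ e → v ∉ f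

/-- `ALG G M`: number of colors produced by the matching based algorithm, i.e.
`|M|` plus the number of connected components of `G − M`. -/
noncomputable def ALG {V : Type*} (G : SimpleGraph V) (M : Set (Sym2 V)) : ℕ :=
  M.ncard + Nat.card (G.deleteEdges M).ConnectedComponent

/-- `H` is a characteristic subgraph of `G` with respect to the coloring `C`:
a subgraph of `G` containing exactly one edge of each color used by `C`. -/
def IsCharSubgraph {V : Type*} (G : SimpleGraph V) (C : Sym2 V → ℕ)
    (H : SimpleGraph V) : Prop :=
  H ≤ G ∧ ∀ c ∈ C '' G.edgeSet, ∃! e, e ∈ H.edgeSet ∧ C e = c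

section Aux

variable {V : Type*}

/-- The first edge of a non-nil walk is an edge of the walk. -/
lemma firstEdge_mem {G : SimpleGraph V} {u v : V} (p : G.Walk u v) (hp : ¬ p.Nil) :
    s(u, p.getVert 1) ∈ p.edges := by
  cases p with
  | nil => simp at hp
  | cons h q => simp [Walk.getVert_cons_succ]

/-- The coloring is injective on the edges of a characteristic subgraph. -/
lemma charSubgraph_injOn {G : SimpleGraph V} {C : Sym2 V → ℕ} {H : SimpleGraph V}
    (hH : IsCharSubgraph G C H) : Set.InjOn C H.edgeSet := by
  intro e he f hf hef
  obtain ⟨u, _, huniq⟩ := hH.2 (C e) ⟨e, edgeSet_mono hH.1 he, rfl⟩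
  rw [huniq e ⟨he, rfl⟩, huniq f ⟨hf, hef.symm⟩]

/-- A characteristic subgraph has maximum degree at most 2. -/
lemma charSubgraph_deg_le {G : SimpleGraph V} [Finite V] {C : Sym2 V → ℕ} {H : SimpleGraph V}
    (hC : IsEdge2Coloring G C) (hH : IsCharSubgraph G C H) (v : V) :
    (H.neighborSet v).ncard ≤ 2 := by
  refine le_trans ?_ (hC v)
  apply Set.ncard_le_ncard_of_injOn (fun u => C s(v, u))
  · intro u hu
    exact ⟨s(v, u), ⟨G.mem_edgeSet.2 (hH.1 hu), by simp⟩, rfl⟩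
  · intro u hu u' hu' h
    have he : s(v, u) ∈ H.edgeSet := H.mem_edgeSet.2 hu
    have he' : s(v, u') ∈ H.edgeSet := H.mem_edgeSet.2 hu'
    exact Sym2.congr_right.mp (charSubgraph_injOn hH he he' h)

/-- In a graph of max degree ≤ 2, the neighborhood of any vertex of a cycle consists of
exactly its two (distinct) neighbors on the cycle. -/
lemma cycle_nbhd [Finite V] {H : SimpleGraph V} (hdeg : ∀ x : V, (H.neighborSet x).ncard ≤ 2)
    {v : V} {p : H.Walk v v} (hp : p.IsCycle) {x : V} (hx : x ∈ p.support) :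
    ∃ a b : V, a ≠ b ∧ a ∈ p.support ∧ b ∈ p.support ∧
      s(x, a) ∈ p.edges ∧ s(x, b) ∈ p.edges ∧ H.neighborSet x = {a, b} := by
  classical
  have hq : (p.rotate x hx).IsCycle := hp.rotate hx
  have hqe : ∀ e, e ∈ (p.rotate x hx).edges → e ∈ p.edges :=
    fun e he => (p.rotate_edges x hx).mem_iff.mp he
  set q := p.rotate x hx with hqdef
  clear_value q
  clear hqdef
  cases q with
  | nil => exact absurd rfl hq.ne_nil
  | @cons _ y _ h r =>
    rw [Walk.cons_isCycle_iff] at hq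
    have hrnn : ¬ r.Nil := Walk.not_nil_of_ne (fun hyx => h.ne hyx.symm)
    have hrvnn : ¬ r.reverse.Nil := by
      rw [Walk.nil_iff_length_eq, Walk.length_reverse]
      rwa [Walk.nil_iff_length_eq] at hrnn
    obtain ⟨b, hbdef⟩ : ∃ b, b = r.reverse.getVert 1 := ⟨_, rfl⟩
    have hbadj : H.Adj x b := hbdef ▸ r.reverse.adj_snd hrvnn
    have hbe : s(x, b) ∈ r.edges := by
      have := firstEdge_mem r.reverse hrvnn
      rw [Walk.edges_reverse, List.mem_reverse] at this
      rwa [hbdef]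
    have hby : b ≠ y := by
      rintro rfl
      exact hq.2 hbe
    have hN : H.neighborSet x = {y, b} := by
      refine (Set.eq_of_subset_of_ncard_le ?_ ?_ (Set.toFinite _)).symm
      · rintro z (rfl | rfl)
        · exact h
        · exact hbadj
      · rw [Set.ncard_pair (fun hyb => hby hyb.symm)]
        exact hdeg x
    have hye : s(x, y) ∈ (Walk.cons h r).edges := by simp
    have hbe' : s(x, b) ∈ (Walk.cons h r).edges := by
      rw [Walk.edges_cons]
      exact List.mem_cons_of_mem _ hbe
    refine ⟨y, b, hby.symm, ?_, ?_, hqe _ hye, hqe _ hbe', hN⟩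
    · exact Walk.snd_mem_support_of_mem_edges p (hqe _ hye)
    · exact Walk.snd_mem_support_of_mem_edges p (hqe _ hbe')

/-- Everything reachable from the base of a cycle in a graph of max degree ≤ 2 lies
on the cycle. -/
lemma cycle_closure [Finite V] {H : SimpleGraph V} (hdeg : ∀ x : V, (H.neighborSet x).ncard ≤ 2)
    {v : V} {p : H.Walk v v} (hp : p.IsCycle) {y : V} (h : H.Reachable v y) :
    y ∈ p.support := by
  have key : ∀ {x z : V} (_ : H.Walk x z), x ∈ p.support → z ∈ p.support := by
    intro x z q
    induction q with
    | nil => exact id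
    | cons hadj q ih =>
      intro hx
      apply ih
      obtain ⟨a, b, _, ha, hb, _, _, hN⟩ := cycle_nbhd hdeg hp hx
      have hmem : _ ∈ H.neighborSet _ := hadj
      rw [hN] at hmem
      rcases hmem with rfl | rfl
      · exact ha
      · exact hb
  obtain ⟨q⟩ := h
  exact key q p.start_mem_support

/-- There exists a characteristic subgraph. -/
lemma exists_charSubgraph (G : SimpleGraph V) (C : Sym2 V → ℕ) :
    ∃ H : SimpleGraph V, IsCharSubgraph G C H := by
  classical
  have hch : ∀ c : {c // c ∈ C '' G.edgeSet}, ∃ e, e ∈ G.edgeSet ∧ C e = (c : ℕ) := by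
    rintro ⟨c, e, he, rfl⟩; exact ⟨e, he, rfl⟩
  choose f hf1 hf2 using hch
  have hedges : (fromEdgeSet (Set.range f)).edgeSet = Set.range f := by
    rw [edgeSet_fromEdgeSet]
    apply sdiff_eq_self_iff_disjoint.2
    rw [Set.disjoint_left]
    rintro e hdiag ⟨c, rfl⟩
    exact G.not_isDiag_of_mem_edgeSet (hf1 c) hdiag
  refine ⟨fromEdgeSet (Set.range f), ?_, ?_⟩
  · refine le_trans (fromEdgeSet_mono ?_) (le_of_eq (fromEdgeSet_edgeSet G))
    rintro e ⟨c, rfl⟩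
    exact hf1 c
  · intro c hc
    refine ⟨f ⟨c, hc⟩, ⟨by rw [hedges]; exact ⟨_, rfl⟩, hf2 ⟨c, hc⟩⟩, ?_⟩
    rintro e ⟨he, hce⟩
    rw [hedges] at he
    obtain ⟨c', rfl⟩ := he
    have : c' = ⟨c, hc⟩ := Subtype.ext ((hf2 c').symm.trans hce)
    rw [this]

/-- The map between connected components induced by a subgraph relation is surjective. -/
lemma cc_map_surjective {A B : SimpleGraph V} (h : A ≤ B) :
    Function.Surjective (ConnectedComponent.map (Hom.ofLE h)) := by
  intro d
  refine d.ind (fun x => ⟨A.connectedComponentMk x, ?_⟩)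
  rfl

end Aux

section Swap

variable {V : Type*} [Fintype V]

/-- The key exchange step: if a characteristic subgraph has a cycle, we can find
another characteristic subgraph with strictly fewer connected components. -/
lemma charSubgraph_swap {G : SimpleGraph V}
    (hδ : ∀ v : V, 3 ≤ (G.neighborSet v).ncard)
    {C : Sym2 V → ℕ} (hC : IsEdge2Coloring G C)
    {H : SimpleGraph V} (hH : IsCharSubgraph G C H) (hcyc : ¬ H.IsAcyclic) :
    ∃ H' : SimpleGraph V, IsCharSubgraph G C H' ∧
      Nat.card H'.ConnectedComponent < Nat.card H.ConnectedComponent := by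
  classical
  have hdeg := charSubgraph_deg_le hC hH
  simp only [IsAcyclic, not_forall, not_not] at hcyc
  obtain ⟨v, p, hp⟩ := hcyc
  -- the two neighbors of `v` on the cycle
  obtain ⟨a, b, hab, ha, hb, hae, hbe, hN⟩ := cycle_nbhd hdeg hp p.start_mem_support
  have haadj : H.Adj v a := by
    have : a ∈ H.neighborSet v := by rw [hN]; exact Set.mem_insert _ _
    exact this
  have hbadj : H.Adj v b := by
    have : b ∈ H.neighborSet v := by rw [hN]; exact Set.mem_insert_of_mem _ rfl
    exact this
  -- a third `G`-neighbor `w` of `v`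
  obtain ⟨w, hwG, hwab⟩ : ∃ w, w ∈ G.neighborSet v ∧ w ∉ ({a, b} : Set V) := by
    by_contra hcon
    push_neg at hcon
    have h2 : (G.neighborSet v).ncard ≤ 2 := by
      have := Set.ncard_le_ncard hcon (Set.toFinite _)
      rwa [Set.ncard_pair hab] at this
    have h3 := hδ v
    omega
  have hgvw : G.Adj v w := hwG
  set g : Sym2 V := s(v, w) with hgdef
  have hgG : g ∈ G.edgeSet := G.mem_edgeSet.2 hgvw
  set c : ℕ := C g with hcdef
  obtain ⟨e, ⟨heH, hec⟩, heuniq⟩ := hH.2 c ⟨g, hgG, rfl⟩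
  have heuniq' : ∀ y, y ∈ H.edgeSet ∧ C y = c → y = e := fun y hy => heuniq y hy
  -- the colors at `v` are exactly those of the two cycle edges at `v`
  have haH : s(v, a) ∈ H.edgeSet := H.mem_edgeSet.2 haadj
  have hbH : s(v, b) ∈ H.edgeSet := H.mem_edgeSet.2 hbadj
  have hCvab : C s(v, a) ≠ C s(v, b) := by
    intro hcc
    exact hab (Sym2.congr_right.mp (charSubgraph_injOn hH haH hbH hcc))
  have hTv : C '' G.incidenceSet v = {C s(v, a), C s(v, b)} := by
    refine (Set.eq_of_subset_of_ncard_le ?_ ?_ (Set.toFinite _)).symm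
    · rintro z (rfl | rfl)
      · exact ⟨s(v, a), ⟨G.mem_edgeSet.2 (hH.1 haadj), by simp⟩, rfl⟩
      · exact ⟨s(v, b), ⟨G.mem_edgeSet.2 (hH.1 hbadj), by simp⟩, rfl⟩
    · rw [Set.ncard_pair hCvab]; exact hC v
  -- the unique `H`-edge of color `c` is a cycle edge at `v`
  obtain ⟨u₀, hu₀e, hu₀cyc, hu₀ab⟩ :
      ∃ u₀, e = s(v, u₀) ∧ s(v, u₀) ∈ p.edges ∧ u₀ ∈ ({a, b} : Set V) := by
    have hcv : c ∈ C '' G.incidenceSet v := ⟨g, ⟨hgG, by simp [hgdef]⟩, rfl⟩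
    rw [hTv] at hcv
    rcases hcv with h' | h'
    · exact ⟨a, (heuniq' s(v, a) ⟨haH, h'.symm⟩).symm, hae, Set.mem_insert _ _⟩
    · exact ⟨b, (heuniq' s(v, b) ⟨hbH, h'.symm⟩).symm, hbe, Set.mem_insert_of_mem _ rfl⟩
  have hwv : w ≠ v := hgvw.ne'
  have hwu₀ : w ≠ u₀ := by
    rintro rfl
    exact hwab hu₀ab
  have hwe : w ∉ e := by
    rw [hu₀e, Sym2.mem_iff]
    rintro (rfl | rfl)
    · exact hwv rfl
    · exact hwu₀ rfl
  -- `w` has at most one neighbor in `H`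
  have hwsub : ∀ y₁ y₂ : V, H.Adj w y₁ → H.Adj w y₂ → y₁ = y₂ := by
    intro y₁ y₂ h1 h2
    by_contra hne
    have hf1 : s(w, y₁) ∈ H.edgeSet := H.mem_edgeSet.2 h1
    have hf2 : s(w, y₂) ∈ H.edgeSet := H.mem_edgeSet.2 h2
    have hCf : C s(w, y₁) ≠ C s(w, y₂) := fun hcc =>
      hne (Sym2.congr_right.mp (charSubgraph_injOn hH hf1 hf2 hcc))
    have hTw : C '' G.incidenceSet w = {C s(w, y₁), C s(w, y₂)} := by
      refine (Set.eq_of_subset_of_ncard_le ?_ ?_ (Set.toFinite _)).symm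
      · rintro z (rfl | rfl)
        · exact ⟨s(w, y₁), ⟨G.mem_edgeSet.2 (hH.1 h1), by simp⟩, rfl⟩
        · exact ⟨s(w, y₂), ⟨G.mem_edgeSet.2 (hH.1 h2), by simp⟩, rfl⟩
      · rw [Set.ncard_pair hCf]; exact hC w
    have hcw : c ∈ C '' G.incidenceSet w := ⟨g, ⟨hgG, by simp [hgdef]⟩, rfl⟩
    rw [hTw] at hcw
    rcases hcw with h' | h'
    · refine hwe ?_
      rw [← heuniq' s(w, y₁) ⟨hf1, h'.symm⟩]
      simp
    · refine hwe ?_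
      rw [← heuniq' s(w, y₂) ⟨hf2, h'.symm⟩]
      simp
  have hwns : w ∉ p.support := by
    intro hws
    obtain ⟨a', b', hab', _, _, _, _, hN'⟩ := cycle_nbhd hdeg hp hws
    have h1 : H.Adj w a' := by
      have : a' ∈ H.neighborSet w := by rw [hN']; exact Set.mem_insert _ _
      exact this
    have h2 : H.Adj w b' := by
      have : b' ∈ H.neighborSet w := by rw [hN']; exact Set.mem_insert_of_mem _ rfl
      exact this
    exact hab' (hwsub _ _ h1 h2)
  have hnr : ¬ H.Reachable v w := fun h => hwns (cycle_closure hdeg hp h)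
  -- the new graph `H'`
  set E' : Set (Sym2 V) := insert g (H.edgeSet \ {e}) with hE'def
  set H' : SimpleGraph V := fromEdgeSet E' with hH'def
  have hE' : H'.edgeSet = E' := by
    rw [hH'def, edgeSet_fromEdgeSet]
    apply sdiff_eq_self_iff_disjoint.2
    rw [Set.disjoint_left]
    intro f hdiag hf
    rcases Set.mem_insert_iff.1 hf with rfl | hf'
    · exact G.not_isDiag_of_mem_edgeSet hgG hdiag
    · exact H.not_isDiag_of_mem_edgeSet hf'.1 hdiag
  have hH'le : H' ≤ G := by
    intro x y hxy
    rw [hH'def, fromEdgeSet_adj] at hxy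
    rcases Set.mem_insert_iff.1 hxy.1 with h' | h'
    · have : s(x, y) ∈ G.edgeSet := by rw [h']; exact hgG
      exact G.mem_edgeSet.1 this
    · exact hH.1 (H.mem_edgeSet.1 h'.1)
  have hgE' : g ∈ H'.edgeSet := by rw [hE']; exact Set.mem_insert _ _
  have hH'char : IsCharSubgraph G C H' := by
    refine ⟨hH'le, ?_⟩
    intro c' hc'
    by_cases hcc : c' = c
    · subst hcc
      refine ⟨g, ⟨hgE', rfl⟩, ?_⟩
      rintro y ⟨hy, hyc⟩
      rw [hE'] at hy
      rcases Set.mem_insert_iff.1 hy with rfl | hy'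
      · rfl
      · exact absurd (heuniq' y ⟨hy'.1, hyc⟩) (by simpa using hy'.2)
    · obtain ⟨e₁, ⟨he₁H, he₁c⟩, he₁u⟩ := hH.2 c' hc'
      have he₁ne : e₁ ≠ e := fun h => hcc (by rw [← he₁c, h, hec])
      refine ⟨e₁, ⟨?_, he₁c⟩, ?_⟩
      · rw [hE']
        exact Set.mem_insert_of_mem _ ⟨he₁H, by simpa using he₁ne⟩
      · rintro y ⟨hy, hyc⟩
        rw [hE'] at hy
        rcases Set.mem_insert_iff.1 hy with rfl | hy'
        · exact absurd (show c' = c by rw [← hyc]) hcc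
        · exact he₁u y ⟨hy'.1, hyc⟩
  -- counting connected components
  set H1 : SimpleGraph V := H \ fromEdgeSet {e} with hH1def
  have hH1le : H1 ≤ H := sdiff_le
  have hvu₀ : H1.Reachable v u₀ := by
    have h2 := (adj_and_reachable_delete_edges_iff_exists_cycle (G := H) (v := v) (w := u₀)).2
      ⟨v, p, hp, hu₀cyc⟩
    rw [hH1def, hu₀e]
    exact h2.2
  have hkey : ∀ {x z : V}, H.Walk x z → H1.Reachable x z := by
    intro x z q
    induction q with
    | nil => exact Reachable.refl _
    | @cons x' y' z' hadj q ih =>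
      refine Reachable.trans ?_ ih
      by_cases hxe : s(x', y') = e
      · rw [hu₀e] at hxe
        rcases Sym2.eq_iff.1 hxe with ⟨rfl, rfl⟩ | ⟨rfl, rfl⟩
        · exact hvu₀
        · exact hvu₀.symm
      · refine Adj.reachable ?_
        rw [hH1def, sdiff_adj]
        exact ⟨hadj, fun hcon => hxe ((fromEdgeSet_adj _).1 hcon).1⟩
  have hH1H : Nat.card H.ConnectedComponent = Nat.card H1.ConnectedComponent := by
    refine (Nat.card_eq_of_bijective (ConnectedComponent.map (Hom.ofLE hH1le))
      ⟨?_, cc_map_surjective hH1le⟩).symm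
    intro d1 d2
    refine ConnectedComponent.ind₂ (fun x y hxy => ?_) d1 d2
    have hr : H.Reachable x y := ConnectedComponent.exact hxy
    obtain ⟨q⟩ := hr
    exact ConnectedComponent.sound (hkey q)
  have hH1H' : H1 ≤ H' := by
    intro x y hxy
    rw [hH1def, sdiff_adj] at hxy
    rw [hH'def, fromEdgeSet_adj]
    refine ⟨Set.mem_insert_of_mem _ ⟨H.mem_edgeSet.2 hxy.1, ?_⟩, hxy.1.ne⟩
    simp only [Set.mem_singleton_iff]
    intro hcon
    exact hxy.2 (by rw [fromEdgeSet_adj]; exact ⟨by rw [hcon]; rfl, hxy.1.ne⟩)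
  have hlt : Nat.card H'.ConnectedComponent < Nat.card H1.ConnectedComponent := by
    haveI : Fintype H1.ConnectedComponent := Fintype.ofFinite _
    haveI : Fintype H'.ConnectedComponent := Fintype.ofFinite _
    rw [Nat.card_eq_fintype_card, Nat.card_eq_fintype_card]
    refine Fintype.card_lt_of_surjective_not_injective _ (cc_map_surjective hH1H') ?_
    intro hinj
    have heq : H1.connectedComponentMk v = H1.connectedComponentMk w := by
      apply hinj
      have hadj : H'.Adj v w := by
        rw [hH'def, fromEdgeSet_adj]
        exact ⟨Set.mem_insert _ _, hgvw.ne⟩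
      exact ConnectedComponent.sound hadj.reachable
    exact hnr ((ConnectedComponent.exact heq).mono hH1le)
  exact ⟨H', hH'char, by rw [hH1H]; exact hlt⟩

end Swap

/-- For a graph with minimum degree at least 3 and an edge 2-coloring `C`, there is a
characteristic subgraph which is a disjoint union of paths (max degree ≤ 2 and acyclic). -/
theorem exists_path_union_char_subgraph {V : Type*} [Fintype V] (G : SimpleGraph V)
    (hδ : ∀ v : V, 3 ≤ (G.neighborSet v).ncard)
    (C : Sym2 V → ℕ) (hC : IsEdge2Coloring G C) :
    ∃ H : SimpleGraph V, IsCharSubgraph G C H ∧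
      (∀ v : V, (H.neighborSet v).ncard ≤ 2) ∧ H.IsAcyclic := by
  classical
  obtain ⟨H₀, hH₀⟩ := exists_charSubgraph G C
  have hne : {n : ℕ | ∃ H : SimpleGraph V, IsCharSubgraph G C H ∧
      Nat.card H.ConnectedComponent = n}.Nonempty := ⟨_, H₀, hH₀, rfl⟩
  obtain ⟨H, hH, hcard⟩ := Nat.sInf_mem hne
  refine ⟨H, hH, fun v => charSubgraph_deg_le hC hH v, ?_⟩
  by_contra hcyc
  obtain ⟨H', hH', hlt⟩ := charSubgraph_swap hδ hC hH hcyc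
  have hle : sInf {n : ℕ | ∃ H : SimpleGraph V, IsCharSubgraph G C H ∧
      Nat.card H.ConnectedComponent = n} ≤ Nat.card H'.ConnectedComponent :=
    Nat.sInf_le ⟨H', hH', rfl⟩
  omega
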